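/- Let d ≥ 1 and let ρ be a density matrix indexed by (Fin d × Fin d) that is invariant under all twirling unitaries, i.e. (U ⊗ Ū) ρ (U ⊗ Ū)ᴴ = ρ for every d×d unitary matrix U, where Ū denotes the entrywise complex conjugate of U and ⊗ denotes the Kronecker product. Then ρ is an isotropic state: there exists a real number p such that ρ = (1−p)•Φ_d + (p/d²)•I, where I is the identity matrix indexed by (Fin d × Fin d). -/

import Mathlib

open Matrix
open scoped Kronecker ComplexOrder

/-- The maximally entangled projector `Φ_d`. -/
noncomputable def maxEnt (d : ℕ) : Matrix (Fin d × Fin d) (Fin d × Fin d) ℂ :=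
  Matrix.of fun p q => if p.1 = p.2 ∧ q.1 = q.2 then 1 / (d : ℂ) else 0

private lemma sum_eq_two' {α M : Type*} [Fintype α] [DecidableEq α] [AddCommMonoid M]
    (i0 i1 : α) (h : i0 ≠ i1) (f : α → M) (hf : ∀ c, c ≠ i0 → c ≠ i1 → f c = 0) :
    ∑ c, f c = f i0 + f i1 := by
  rw [← Finset.sum_subset (Finset.subset_univ ({i0, i1} : Finset α))
    (fun x _ hx => by
      simp only [Finset.mem_insert, Finset.mem_singleton] at hx
      push_neg at hx
      exact hf x hx.1 hx.2)]
  rw [Finset.sum_insert (by simpa using h), Finset.sum_singleton]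

private lemma sum_eq_four' {α M : Type*} [Fintype α] [DecidableEq α] [AddCommMonoid M]
    (i0 i1 : α) (h : i0 ≠ i1) (f : α × α → M)
    (hf : ∀ p : α × α, (p.1 ≠ i0 ∧ p.1 ≠ i1) ∨ (p.2 ≠ i0 ∧ p.2 ≠ i1) → f p = 0) :
    ∑ p, f p = f (i0, i0) + f (i0, i1) + (f (i1, i0) + f (i1, i1)) := by
  rw [Fintype.sum_prod_type]
  rw [sum_eq_two' i0 i1 h _ (fun c h0 h1 =>
    Finset.sum_eq_zero fun k _ => hf (c, k) (Or.inl ⟨h0, h1⟩))]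
  rw [sum_eq_two' i0 i1 h _ (fun k h0 h1 => hf (i0, k) (Or.inr ⟨h0, h1⟩)),
    sum_eq_two' i0 i1 h _ (fun k h0 h1 => hf (i1, k) (Or.inr ⟨h0, h1⟩))]

private lemma permMatrix_conjTranspose {n : Type*} [DecidableEq n] (σ : Equiv.Perm n) :
    ((σ.toPEquiv.toMatrix : Matrix n n ℂ))ᴴ = σ.symm.toPEquiv.toMatrix := by
  ext a b
  rw [Matrix.conjTranspose_apply]
  simp only [PEquiv.toMatrix_apply, Equiv.toPEquiv_apply, Option.mem_def, Option.some.injEq]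
  by_cases h : a = σ b
  · rw [if_pos h.symm, if_pos (by rw [h, Equiv.symm_apply_apply])]
    simp
  · rw [if_neg (fun hc => h hc.symm), if_neg (fun hc => h (by rw [← hc, Equiv.apply_symm_apply]))]
    simp

private lemma permMatrix_unitary {n : Type*} [Fintype n] [DecidableEq n] (σ : Equiv.Perm n) :
    (σ.toPEquiv.toMatrix : Matrix n n ℂ) ∈ Matrix.unitaryGroup n ℂ := by
  rw [Matrix.mem_unitaryGroup_iff, Matrix.star_eq_conjTranspose, permMatrix_conjTranspose,
    ← PEquiv.toMatrix_trans, ← Equiv.toPEquiv_trans, Equiv.self_trans_symm,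
    Equiv.toPEquiv_refl, PEquiv.toMatrix_refl]

theorem twirling_invariant_is_isotropic (d : ℕ) (hd : 1 ≤ d)
    (ρ : Matrix (Fin d × Fin d) (Fin d × Fin d) ℂ)
    (hρ : ρ.PosSemidef) (hρtr : ρ.trace = 1)
    (hinv : ∀ U ∈ Matrix.unitaryGroup (Fin d) ℂ,
      (U ⊗ₖ U.map (starRingEnd ℂ)) * ρ * (U ⊗ₖ U.map (starRingEnd ℂ))ᴴ = ρ) :
    ∃ p : ℝ, ρ = (1 - p) • maxEnt d + (p / (d : ℝ) ^ 2) • (1 : Matrix (Fin d × Fin d) (Fin d × Fin d) ℂ) := by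
  classical
  rcases eq_or_lt_of_le hd with hd1 | hd2
  · -- case d = 1
    have hd1' : d = 1 := hd1.symm
    subst hd1'
    refine ⟨0, ?_⟩
    have htr : ρ (0, 0) (0, 0) = 1 := by
      rw [← hρtr, Matrix.trace]
      simp [Matrix.diag, Fintype.sum_prod_type]
    ext p q
    have hp : p = (0, 0) := Subsingleton.elim _ _
    have hq : q = (0, 0) := Subsingleton.elim _ _
    subst hp; subst hq
    simpa [maxEnt] using htr
  · -- case d ≥ 2
    set i0 : Fin d := ⟨0, by omega⟩ with hi0
    set i1 : Fin d := ⟨1, by omega⟩ with hi1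
    have h01 : i0 ≠ i1 := by
      simp [hi0, hi1, Fin.ext_iff]
    -- Step A: support of ρ
    have phase : ∀ a : Fin d, ∀ p q : Fin d × Fin d,
        (((if p.1 = a then Complex.I else 1) * star (if p.2 = a then Complex.I else 1)) *
          star ((if q.1 = a then Complex.I else 1) * star (if q.2 = a then Complex.I else 1)))
          * ρ p q = ρ p q := by
      intro a p q
      set c : Fin d → ℂ := fun b => if b = a then Complex.I else 1 with hc
      have hcu : ∀ b, c b * star (c b) = 1 := by
        intro b
        simp only [hc]
        split_ifs <;> simp [Complex.conj_I]
      have hU : (Matrix.diagonal c) ∈ Matrix.unitaryGroup (Fin d) ℂ := by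
        rw [Matrix.mem_unitaryGroup_iff]
        rw [Matrix.star_eq_conjTranspose, Matrix.diagonal_conjTranspose,
          Matrix.diagonal_mul_diagonal, ← Matrix.diagonal_one]
        exact congrArg Matrix.diagonal (funext fun b => hcu b)
      have hmap : (Matrix.diagonal c).map (starRingEnd ℂ)
          = Matrix.diagonal (fun b => star (c b)) := by
        rw [Matrix.diagonal_map (map_zero _)]
        rfl
      have hkron : (Matrix.diagonal c) ⊗ₖ (Matrix.diagonal c).map (starRingEnd ℂ)
          = Matrix.diagonal (fun p : Fin d × Fin d => c p.1 * star (c p.2)) := by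
        rw [hmap, Matrix.diagonal_kronecker_diagonal]
      have h := hinv (Matrix.diagonal c) hU
      rw [hkron, Matrix.diagonal_conjTranspose] at h
      have h2 := congrFun (congrFun h p) q
      rw [Matrix.mul_diagonal, Matrix.diagonal_mul] at h2
      simp only [Pi.star_apply] at h2
      have hpq1 : (if p.1 = a then Complex.I else 1) = c p.1 := rfl
      have hpq2 : (if p.2 = a then Complex.I else 1) = c p.2 := rfl
      have hpq3 : (if q.1 = a then Complex.I else 1) = c q.1 := rfl
      have hpq4 : (if q.2 = a then Complex.I else 1) = c q.2 := rfl
      rw [hpq1, hpq2, hpq3, hpq4]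
      linear_combination h2
    have hsupp : ∀ i k j l : Fin d, ρ (i, k) (j, l) ≠ 0 →
        (i = k ∧ j = l) ∨ (i = j ∧ k = l) := by
      intro i k j l hne
      have key : ∀ a : Fin d,
          ((if i = a then Complex.I else 1) * star (if k = a then Complex.I else 1)) *
            star ((if j = a then Complex.I else 1) * star (if l = a then Complex.I else 1))
            = 1 := by
        intro a
        by_contra hμ
        apply hne
        have h := phase a (i, k) (j, l)
        have h3 : (((if i = a then Complex.I else 1) * star (if k = a then Complex.I else 1)) *
            star ((if j = a then Complex.I else 1) * star (if l = a then Complex.I else 1)) - 1)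
            * ρ (i, k) (j, l) = 0 := by
          linear_combination h
        rcases mul_eq_zero.mp h3 with h4 | h4
        · exact absurd (by linear_combination h4) hμ
        · exact h4
      by_cases hik : i = k
      · subst hik
        by_cases hjl : j = l
        · exact Or.inl ⟨rfl, hjl⟩
        · exfalso
          have h := key j
          rw [if_pos rfl, if_neg (fun hc : l = j => hjl hc.symm)] at h
          by_cases hij : i = j
          · rw [if_pos hij] at h
            norm_num [Complex.ext_iff] at h
          · rw [if_neg hij] at h
            norm_num [Complex.ext_iff] at h
      · have h := key i
        rw [if_pos rfl, if_neg (fun hc : k = i => hik hc.symm)] at h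
        by_cases hji : j = i
        · by_cases hli : l = i
          · exfalso
            rw [if_pos hji, if_pos hli] at h
            norm_num [Complex.ext_iff] at h
          · -- j = i, l ≠ i : now test a = k
            have h2 := key k
            rw [if_neg hik, if_pos rfl,
              if_neg (fun hc : j = k => hik (hji.symm.trans hc))] at h2
            by_cases hlk : l = k
            · exact Or.inr ⟨hji.symm, hlk.symm⟩
            · exfalso
              rw [if_neg hlk] at h2
              norm_num [Complex.ext_iff] at h2
        · exfalso
          by_cases hli : l = i
          · rw [if_neg hji, if_pos hli] at h
            norm_num [Complex.ext_iff] at h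
          · rw [if_neg hji, if_neg hli] at h
            norm_num [Complex.ext_iff] at h
    -- Step B: permutation invariance
    have perm : ∀ σ : Equiv.Perm (Fin d), ∀ p q : Fin d × Fin d,
        ρ (σ p.1, σ p.2) (σ q.1, σ q.2) = ρ p q := by
      intro σ p q
      have hmapc : ((σ.toPEquiv.toMatrix : Matrix (Fin d) (Fin d) ℂ)).map (starRingEnd ℂ)
          = σ.toPEquiv.toMatrix := by
        ext a b
        simp only [Matrix.map_apply, PEquiv.toMatrix_apply]
        split_ifs <;> simp
      have hkron : (σ.toPEquiv.toMatrix : Matrix (Fin d) (Fin d) ℂ) ⊗ₖ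
          ((σ.toPEquiv.toMatrix : Matrix (Fin d) (Fin d) ℂ)).map (starRingEnd ℂ)
          = (σ.prodCongr σ).toPEquiv.toMatrix := by
        rw [hmapc]
        ext ⟨a, b⟩ ⟨c, e⟩
        simp only [Matrix.kroneckerMap_apply, PEquiv.toMatrix_apply, Equiv.toPEquiv_apply,
          Option.mem_def, Option.some.injEq, Equiv.prodCongr_apply, Prod.map, Prod.mk.injEq]
        by_cases h1 : σ a = c <;> by_cases h2 : σ b = e <;> simp [h1, h2]
      have h := hinv _ (permMatrix_unitary σ)
      rw [hkron, permMatrix_conjTranspose, PEquiv.toMatrix_toPEquiv_mul,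
        PEquiv.mul_toMatrix_toPEquiv, Equiv.symm_symm] at h
      have h2 := congrFun (congrFun h p) q
      simpa [Matrix.submatrix_apply, Equiv.prodCongr_apply, Prod.map] using h2
    -- transitivity
    have htrans : ∀ i j : Fin d, i ≠ j → ∃ σ : Equiv.Perm (Fin d), σ i0 = i ∧ σ i1 = j := by
      intro i j hij
      set j' := Equiv.swap i0 i j with hj'
      have hj'0 : j' ≠ i0 := by
        intro hc
        apply hij
        have h := congrArg (Equiv.swap i0 i) hc
        rw [hj', Equiv.swap_apply_self, Equiv.swap_apply_left] at h
        exact h.symm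
      refine ⟨(Equiv.swap i1 j').trans (Equiv.swap i0 i), ?_, ?_⟩
      · rw [Equiv.trans_apply, Equiv.swap_apply_of_ne_of_ne h01 (Ne.symm hj'0),
          Equiv.swap_apply_left]
      · rw [Equiv.trans_apply, Equiv.swap_apply_left, hj', Equiv.swap_apply_self]
    set x : ℂ := ρ (i0, i0) (i0, i0) with hxd
    set y : ℂ := ρ (i0, i0) (i1, i1) with hyd
    set z : ℂ := ρ (i0, i1) (i0, i1) with hzd
    have hx : ∀ i : Fin d, ρ (i, i) (i, i) = x := by
      intro i
      have h := perm (Equiv.swap i0 i) (i0, i0) (i0, i0)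
      simpa [Equiv.swap_apply_left] using h
    have hy : ∀ i j, i ≠ j → ρ (i, i) (j, j) = y := by
      intro i j hij
      obtain ⟨σ, h0, h1⟩ := htrans i j hij
      have h := perm σ (i0, i0) (i1, i1)
      simpa [h0, h1] using h
    have hz : ∀ i k, i ≠ k → ρ (i, k) (i, k) = z := by
      intro i k hik
      obtain ⟨σ, h0, h1⟩ := htrans i k hik
      have h := perm σ (i0, i1) (i0, i1)
      simpa [h0, h1] using h
    have z0 : ∀ P Q : Fin d × Fin d, ¬(P.1 = P.2 ∧ Q.1 = Q.2) → ¬(P.1 = Q.1 ∧ P.2 = Q.2) →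
        ρ P Q = 0 := by
      intro P Q h1 h2
      by_contra hc
      rcases hsupp P.1 P.2 Q.1 Q.2 (by simpa using hc) with h | h
      exacts [h1 h, h2 h]
    -- Step D : Hadamard
    set s : ℂ := ((Real.sqrt 2 : ℝ) : ℂ)⁻¹ with hs
    have hcs : star s = s := by
      rw [hs, Complex.star_def, map_inv₀, Complex.conj_ofReal]
    have hss : s * s = 1 / 2 := by
      rw [hs, ← mul_inv, ← Complex.ofReal_mul, Real.mul_self_sqrt (by norm_num : (0:ℝ) ≤ 2)]
      norm_num
    set H : Matrix (Fin d) (Fin d) ℂ := Matrix.of (fun b c =>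
      if b = i0 then (if c = i0 then s else if c = i1 then s else 0)
      else if b = i1 then (if c = i0 then s else if c = i1 then -s else 0)
      else if c = b then 1 else 0) with hH
    have hH00 : H i0 i0 = s := by simp [hH]
    have hH01 : H i0 i1 = s := by simp [hH, Ne.symm h01]
    have hH10 : H i1 i0 = s := by simp [hH, h01, Ne.symm h01]
    have hH11 : H i1 i1 = -s := by simp [hH, h01, Ne.symm h01]
    have hH0c : ∀ c, c ≠ i0 → c ≠ i1 → H i0 c = 0 := by
      intro c h0 h1; simp [hH, h0, h1]
    have hH1c : ∀ c, c ≠ i0 → c ≠ i1 → H i1 c = 0 := by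
      intro c h0 h1; simp [hH, h0, h1, h01, Ne.symm h01]
    have hHb : ∀ b c, b ≠ i0 → b ≠ i1 → H b c = if c = b then 1 else 0 := by
      intro b c h0 h1; simp [hH, h0, h1]
    have hstarH : ∀ b c, star (H b c) = H b c := by
      intro b c
      simp only [hH, Matrix.of_apply]
      split_ifs <;> simp [hcs]
    have hHU : H ∈ Matrix.unitaryGroup (Fin d) ℂ := by
      rw [Matrix.mem_unitaryGroup_iff]
      ext a b
      rw [Matrix.mul_apply, Matrix.one_apply]
      have hterm : ∀ c, H a c * (star H) c b = H a c * H b c := by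
        intro c; rw [Matrix.star_apply, hstarH]
      rw [Finset.sum_congr rfl fun c _ => hterm c]
      by_cases ha0 : a = i0
      · subst ha0
        rw [sum_eq_two' i0 i1 h01 _ (fun c h0 h1 => by rw [hH0c c h0 h1, zero_mul])]
        by_cases hb0 : b = i0
        · subst hb0
          rw [if_pos rfl, hH00, hH01]
          linear_combination (2:ℂ) * hss
        · by_cases hb1 : b = i1
          · subst hb1
            rw [if_neg h01, hH00, hH10, hH01, hH11]
            ring
          · rw [hH00, hH01, hHb b i0 hb0 hb1, hHb b i1 hb0 hb1,
              if_neg (fun hc : i0 = b => hb0 hc.symm), if_neg (fun hc : i1 = b => hb1 hc.symm)]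
            simp
      · by_cases ha1 : a = i1
        · subst ha1
          rw [sum_eq_two' i0 i1 h01 _ (fun c h0 h1 => by rw [hH1c c h0 h1, zero_mul])]
          by_cases hb0 : b = i0
          · subst hb0
            rw [if_neg (Ne.symm h01), hH10, hH00, hH11, hH01]
            ring
          · by_cases hb1 : b = i1
            · subst hb1
              rw [if_pos rfl, hH10, hH11]
              linear_combination (2:ℂ) * hss
            · rw [hH10, hH11, hHb b i0 hb0 hb1, hHb b i1 hb0 hb1,
                if_neg (fun hc : i1 = b => hb1 hc.symm), if_neg (fun hc : i0 = b => hb0 hc.symm)]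
              simp
        · by_cases hb0 : b = i0
          · subst hb0
            rw [sum_eq_two' i0 i1 h01 _ (fun c h0 h1 => by rw [hH0c c h0 h1, mul_zero])]
            rw [hH00, hH01, hHb a i0 ha0 ha1, hHb a i1 ha0 ha1,
              if_neg (fun hc : i0 = a => ha0 hc.symm), if_neg (fun hc : i1 = a => ha1 hc.symm),
              if_neg (fun hc : a = i0 => ha0 hc)]
            simp
          · by_cases hb1 : b = i1
            · subst hb1
              rw [sum_eq_two' i0 i1 h01 _ (fun c h0 h1 => by rw [hH1c c h0 h1, mul_zero])]
              rw [hH10, hH11, hHb a i0 ha0 ha1, hHb a i1 ha0 ha1,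
                if_neg (fun hc : i0 = a => ha0 hc.symm), if_neg (fun hc : i1 = a => ha1 hc.symm),
                if_neg (fun hc : a = i1 => ha1 hc)]
              simp
            · rw [Finset.sum_congr rfl fun c _ => by
                rw [hHb a c ha0 ha1, hHb b c hb0 hb1]]
              simp only [ite_mul, one_mul, zero_mul]
              rw [Finset.sum_ite_eq' Finset.univ a (fun c => if c = b then (1:ℂ) else 0)]
              simp only [Finset.mem_univ, if_true]
    have hHmap : H.map (starRingEnd ℂ) = H := by
      ext b c
      rw [Matrix.map_apply, ← Complex.star_def, hstarH]
    -- expansion lemma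
    have hexp : ∀ (A : Matrix (Fin d × Fin d) (Fin d × Fin d) ℂ) (p q : Fin d × Fin d),
        (A * ρ * Aᴴ) p q = ∑ P, ∑ Q, A p P * ρ P Q * star (A q Q) := by
      intro A p q
      rw [Matrix.mul_apply]
      simp_rw [Matrix.mul_apply, Matrix.conjTranspose_apply, Finset.sum_mul]
      rw [Finset.sum_comm]
    have hent := hinv H hHU
    rw [hHmap] at hent
    have heq : ((H ⊗ₖ H) * ρ * (H ⊗ₖ H)ᴴ) (i0, i1) (i0, i1) = z := congrFun (congrFun hent (i0, i1)) (i0, i1)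
    rw [hexp] at heq
    have hcoe : ∀ P : Fin d × Fin d, (H ⊗ₖ H) (i0, i1) P = H i0 P.1 * H i1 P.2 := by
      intro P; rfl
    have houter : ∀ P : Fin d × Fin d, (P.1 ≠ i0 ∧ P.1 ≠ i1) ∨ (P.2 ≠ i0 ∧ P.2 ≠ i1) →
        (∑ Q, (H ⊗ₖ H) (i0, i1) P * ρ P Q * star ((H ⊗ₖ H) (i0, i1) Q)) = 0 := by
      intro P hP
      refine Finset.sum_eq_zero fun Q _ => ?_
      rw [hcoe P]
      rcases hP with ⟨h1, h2⟩ | ⟨h1, h2⟩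
      · rw [hH0c _ h1 h2, zero_mul, zero_mul, zero_mul]
      · rw [hH1c _ h1 h2, mul_zero, zero_mul, zero_mul]
    have hinner0 : ∀ P Q : Fin d × Fin d, (Q.1 ≠ i0 ∧ Q.1 ≠ i1) ∨ (Q.2 ≠ i0 ∧ Q.2 ≠ i1) →
        (H ⊗ₖ H) (i0, i1) P * ρ P Q * star ((H ⊗ₖ H) (i0, i1) Q) = 0 := by
      intro P Q hQ
      rw [hcoe Q]
      rcases hQ with ⟨h1, h2⟩ | ⟨h1, h2⟩
      · rw [hH0c _ h1 h2, zero_mul, star_zero, mul_zero]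
      · rw [hH1c _ h1 h2, mul_zero, star_zero, mul_zero]
    rw [sum_eq_four' i0 i1 h01 _ houter] at heq
    rw [sum_eq_four' i0 i1 h01 _ (hinner0 (i0, i0)),
        sum_eq_four' i0 i1 h01 _ (hinner0 (i0, i1)),
        sum_eq_four' i0 i1 h01 _ (hinner0 (i1, i0)),
        sum_eq_four' i0 i1 h01 _ (hinner0 (i1, i1))] at heq
    simp only [hcoe] at heq
    -- rho values
    have r00_01 : ρ (i0, i0) (i0, i1) = 0 := z0 _ _ (by simp [h01, Ne.symm h01]) (by simp [h01, Ne.symm h01])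
    have r00_10 : ρ (i0, i0) (i1, i0) = 0 := z0 _ _ (by simp [h01, Ne.symm h01]) (by simp [h01, Ne.symm h01])
    have r01_00 : ρ (i0, i1) (i0, i0) = 0 := z0 _ _ (by simp [h01, Ne.symm h01]) (by simp [h01, Ne.symm h01])
    have r01_10 : ρ (i0, i1) (i1, i0) = 0 := z0 _ _ (by simp [h01, Ne.symm h01]) (by simp [h01, Ne.symm h01])
    have r01_11 : ρ (i0, i1) (i1, i1) = 0 := z0 _ _ (by simp [h01, Ne.symm h01]) (by simp [h01, Ne.symm h01])
    have r10_00 : ρ (i1, i0) (i0, i0) = 0 := z0 _ _ (by simp [h01, Ne.symm h01]) (by simp [h01, Ne.symm h01])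
    have r10_01 : ρ (i1, i0) (i0, i1) = 0 := z0 _ _ (by simp [h01, Ne.symm h01]) (by simp [h01, Ne.symm h01])
    have r10_11 : ρ (i1, i0) (i1, i1) = 0 := z0 _ _ (by simp [h01, Ne.symm h01]) (by simp [h01, Ne.symm h01])
    have r11_01 : ρ (i1, i1) (i0, i1) = 0 := z0 _ _ (by simp [h01, Ne.symm h01]) (by simp [h01, Ne.symm h01])
    have r11_10 : ρ (i1, i1) (i1, i0) = 0 := z0 _ _ (by simp [h01, Ne.symm h01]) (by simp [h01, Ne.symm h01])
    have r11_00 : ρ (i1, i1) (i0, i0) = y := hy i1 i0 (Ne.symm h01)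
    have r11_11 : ρ (i1, i1) (i1, i1) = x := hx i1
    have r10_10 : ρ (i1, i0) (i1, i0) = z := hz i1 i0 (Ne.symm h01)
    rw [r00_01, r00_10, r01_00, r01_10, r01_11, r10_00, r10_01, r10_11, r11_01, r11_10,
      r11_00, r11_11, r10_10, hH00, hH01, hH10, hH11] at heq
    simp only [star_mul', star_neg, hcs, mul_zero, zero_mul] at heq
    have hxyz : x = y + z := by
      linear_combination (2:ℂ) * heq - 2 * (x - y + z) * (1 + 2 * (s * s)) * hss
    -- Step E : trace
    have htr : (d : ℂ) * x + ((d : ℂ) * (d : ℂ) - (d : ℂ)) * z = 1 := by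
      have ht1 : ρ.trace = ∑ i : Fin d, ∑ k : Fin d, ρ (i, k) (i, k) := by
        rw [Matrix.trace, Fintype.sum_prod_type]
        rfl
      have hinner : ∀ i : Fin d, (∑ k, ρ (i, k) (i, k)) = x + ((d : ℂ) - 1) * z := by
        intro i
        rw [Finset.sum_congr rfl (fun k _ => show ρ (i, k) (i, k)
            = z + (if k = i then x - z else 0) by
          by_cases h : k = i
          · rw [if_pos h, h, hx i]; ring
          · rw [if_neg h, hz i k (fun hc => h hc.symm)]; ring)]
        rw [Finset.sum_add_distrib, Finset.sum_const, Finset.sum_ite_eq' Finset.univ i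
          (fun _ => x - z)]
        simp only [Finset.card_univ, Fintype.card_fin, Finset.mem_univ, if_true, nsmul_eq_mul]
        ring
      rw [ht1, Finset.sum_congr rfl fun i _ => hinner i, Finset.sum_const,
        Finset.card_univ, Fintype.card_fin, nsmul_eq_mul] at hρtr
      linear_combination hρtr
    -- z is real
    have hzre : (z.re : ℂ) = z := by
      rw [← Complex.conj_eq_iff_re]
      have h := congrFun (congrFun hρ.1 (i0, i1)) (i0, i1)
      rw [Matrix.conjTranspose_apply] at h
      exact h
    have hd0 : (d : ℂ) ≠ 0 := Nat.cast_ne_zero.mpr (by omega)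
    have hdr0 : (d : ℝ) ≠ 0 := Nat.cast_ne_zero.mpr (by omega)
    refine ⟨(d : ℝ) ^ 2 * z.re, ?_⟩
    set p : ℝ := (d : ℝ) ^ 2 * z.re with hpdef
    have hpz : ((p / (d : ℝ) ^ 2 : ℝ) : ℂ) = z := by
      rw [hpdef, mul_div_cancel_left₀ _ (pow_ne_zero 2 hdr0)]
      exact hzre
    have hpc : ((p : ℝ) : ℂ) = (d : ℂ) ^ 2 * z := by
      rw [hpdef]
      push_cast
      rw [hzre]
    have h1p : ((1 - p : ℝ) : ℂ) = (d : ℂ) * y := by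
      push_cast
      rw [show ((p : ℝ) : ℂ) = (d : ℂ) ^ 2 * z from hpc]
      linear_combination (-1 : ℂ) * htr + (d : ℂ) * hxyz
    ext P Q
    obtain ⟨i, k⟩ := P
    obtain ⟨j, l⟩ := Q
    rw [Matrix.add_apply, Matrix.smul_apply, Matrix.smul_apply, Matrix.one_apply, maxEnt,
      Matrix.of_apply, Complex.real_smul, Complex.real_smul]
    push_cast [h1p]
    by_cases h1 : i = k ∧ j = l
    · obtain ⟨hik, hjl⟩ := h1
      subst hik; subst hjl
      rw [if_pos ⟨rfl, rfl⟩]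
      by_cases hij : i = j
      · subst hij
        rw [if_pos rfl, hx i, hxyz]
        rw [show ((p : ℝ) : ℂ) / ((d : ℕ) : ℂ) ^ 2 = z by
          rw [hpc]; field_simp]
        field_simp
      · rw [if_neg (by simp [hij] : ¬ ((i, i) = (j, j))), hy i j hij]
        field_simp
        ring
    · rw [if_neg h1]
      by_cases h2 : i = j ∧ k = l
      · obtain ⟨hij, hkl⟩ := h2
        subst hij; subst hkl
        have hik : i ≠ k := fun hc => h1 ⟨hc, hc⟩
        rw [if_pos rfl, hz i k hik]
        rw [show ((p : ℝ) : ℂ) / ((d : ℕ) : ℂ) ^ 2 = z by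
          rw [hpc]; field_simp]
        ring
      · rw [if_neg (by simpa [Prod.ext_iff] using h2), z0 (i, k) (j, l) h1 h2]
        ring
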